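/- In the r-game associated with the one-counter net game N^M_{w,m}, for c ∈ {0, m−1}: the configuration g_c(k) is in Eve's winning region iff k mod m ≠ c, and ḡ_c(k) is in Eve's winning region iff k mod m = c. -/

import Mathlib

/-- A reachability game: states `V`, Eve's states, transition relation, target set. -/
structure RGame (V : Type) where
  eve : Set V
  trans : V → V → Prop
  target : Set V

open Classical in
/-- The transfinite attractor stages: `W 0 = target`; for `o > 0`, a state not in
`W_{<o}` is added if it is Eve's with a transition into `W_{<o}`, or Adam's with a
nonempty successor set contained in `W_{<o}`. -/
noncomputable def RGame.W {V : Type} (g : RGame V) (o : Ordinal.{0}) : Set V :=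
  if o = 0 then g.target
  else
    let Wlt : Set V := ⋃ o' : {x : Ordinal.{0} // x < o}, g.W o'.1
    {s | s ∉ Wlt ∧
      ((s ∈ g.eve ∧ ∃ t, g.trans s t ∧ t ∈ Wlt) ∨
       (s ∉ g.eve ∧ (∃ t, g.trans s t) ∧ ∀ t, g.trans s t → t ∈ Wlt))}
termination_by o
decreasing_by exact o'.2

/-- Eve's winning region: the union of all attractor stages. -/
noncomputable def RGame.WinE {V : Type} (g : RGame V) : Set V := ⋃ o : Ordinal.{0}, g.W o
/-- The reachability game associated with a one-counter net game with control
states `Q`, Eve's control states `eveS`, rules `rules q z q'`, and target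
control state `pwin`: states are `(q, k)` with counter `k ∈ ℕ`, and a rule
`q →^z q'` induces `(q,k) → (q', k+z)` whenever `k + z ≥ 0`. -/
noncomputable def ocnGame {Q : Type} (eveS : Set Q) (rules : Q → ℤ → Q → Prop)
    (pwin : Q) : RGame (Q × ℕ) where
  eve := {p | p.1 ∈ eveS}
  trans := fun p p' => ∃ z : ℤ, rules p.1 z p'.1 ∧ (p.2 : ℤ) + z = (p'.2 : ℤ)
  target := {p | p.1 = pwin}

/-- Control states of the `g_c` / `ḡ_c` gadget together with the `e_c` / `ē_c`
gadget it relies on (plus target `pwin` and dead state `pA`). -/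
inductive GCSt where
  | gc : GCSt
  | gc' : GCSt
  | gbc : GCSt
  | gbc' : GCSt
  | ec : GCSt
  | ec' : GCSt
  | ebc : GCSt
  | ebc' : GCSt
  | pwin : GCSt
  | pA : GCSt

/-- Rules: `g_c →^{-m} g_c`, `g_c →^0 g'_c`, `g'_c →^{-m} p_win`,
`g'_c →^0 e_c`, and symmetrically for `ḡ_c`, together with the `e_c`/`ē_c`
gadget rules. -/
inductive GCRule (m c : ℕ) : GCSt → ℤ → GCSt → Prop
  | g1 : GCRule m c GCSt.gc (-(m : ℤ)) GCSt.gc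
  | g2 : GCRule m c GCSt.gc 0 GCSt.gc'
  | g3 : GCRule m c GCSt.gc' (-(m : ℤ)) GCSt.pwin
  | g4 : GCRule m c GCSt.gc' 0 GCSt.ec
  | g5 : GCRule m c GCSt.gbc (-(m : ℤ)) GCSt.gbc
  | g6 : GCRule m c GCSt.gbc 0 GCSt.gbc'
  | g7 : GCRule m c GCSt.gbc' (-(m : ℤ)) GCSt.pwin
  | g8 : GCRule m c GCSt.gbc' 0 GCSt.ebc
  | r1 : GCRule m c GCSt.ec (-(c : ℤ)) GCSt.ec'
  | r2 : GCRule m c GCSt.ec 0 GCSt.pwin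
  | r3 : GCRule m c GCSt.ec' (-1) GCSt.pwin
  | r4 : GCRule m c GCSt.ebc (-(c : ℤ)) GCSt.ebc'
  | r5 : GCRule m c GCSt.ebc' (-1) GCSt.pA
  | r6 : GCRule m c GCSt.ebc' 0 GCSt.pwin

/-- Eve's control states: `g'_c`, `ḡ'_c`, `e'_c`, `ē_c`, `p_win`, `p_A`;
Adam's: `g_c`, `ḡ_c`, `e_c`, `ē'_c`. -/
def GCEve : Set GCSt :=
  {GCSt.gc', GCSt.gbc', GCSt.ec', GCSt.ebc, GCSt.pwin, GCSt.pA}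

namespace RGame
variable {V : Type} {g : RGame V}

lemma W_zero (g : RGame V) : g.W 0 = g.target := by rw [W]; simp

lemma target_subset_WinE : g.target ⊆ g.WinE := fun s hs =>
  Set.mem_iUnion.2 ⟨0, by rw [W_zero]; exact hs⟩

lemma mem_WinE_of_W {o : Ordinal.{0}} {s : V} (h : s ∈ g.W o) : s ∈ g.WinE :=
  Set.mem_iUnion.2 ⟨o, h⟩

lemma mem_WinE_of_eve {s t : V} (hs : s ∈ g.eve) (ht : g.trans s t) (h : t ∈ g.WinE) :
    s ∈ g.WinE := by
  obtain ⟨o, ho⟩ := Set.mem_iUnion.1 h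
  by_cases hW : s ∈ ⋃ o' : {x : Ordinal.{0} // x < o + 1}, g.W o'.1
  · obtain ⟨o', ho'⟩ := Set.mem_iUnion.1 hW
    exact mem_WinE_of_W ho'
  · refine mem_WinE_of_W (o := o + 1) ?_
    rw [W]
    have hlt : o < o + 1 := by rw [Ordinal.add_one_eq_succ]; exact Order.lt_succ o
    have h1 : o + 1 ≠ 0 := (lt_of_le_of_lt (zero_le (a := o)) hlt).ne'
    rw [if_neg h1]
    refine ⟨hW, Or.inl ⟨hs, t, ht, ?_⟩⟩
    exact Set.mem_iUnion.2 ⟨⟨o, hlt⟩, ho⟩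

lemma mem_WinE_of_adam {s : V} (hs : s ∉ g.eve) (h1 : ∃ t, g.trans s t)
    (h2 : ∀ t, g.trans s t → t ∈ g.WinE) : s ∈ g.WinE := by
  classical
  set f : {t : V // g.trans s t} → Ordinal.{0} :=
    fun t => Classical.choose (Set.mem_iUnion.1 (h2 t.1 t.2)) with hf
  have hfW : ∀ t : {t : V // g.trans s t}, t.1 ∈ g.W (f t) :=
    fun t => Classical.choose_spec (Set.mem_iUnion.1 (h2 t.1 t.2))
  set O : Ordinal.{0} := Ordinal.lsub f with hO
  have hmemlt : ∀ t : V, g.trans s t → t ∈ ⋃ o' : {x : Ordinal.{0} // x < O}, g.W o'.1 := by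
    intro t ht
    exact Set.mem_iUnion.2 ⟨⟨f ⟨t, ht⟩, Ordinal.lt_lsub f ⟨t, ht⟩⟩, hfW ⟨t, ht⟩⟩
  by_cases hW : s ∈ ⋃ o' : {x : Ordinal.{0} // x < O}, g.W o'.1
  · obtain ⟨o', ho'⟩ := Set.mem_iUnion.1 hW
    exact mem_WinE_of_W ho'
  · refine mem_WinE_of_W (o := O) ?_
    obtain ⟨t0, ht0⟩ := h1
    have hO0 : O ≠ 0 :=
      (lt_of_le_of_lt zero_le (Ordinal.lt_lsub f ⟨t0, ht0⟩)).ne'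
    rw [W, if_neg hO0]
    exact ⟨hW, Or.inr ⟨hs, ⟨t0, ht0⟩, hmemlt⟩⟩

lemma WinE_subset {S : Set V} (h0 : g.target ⊆ S)
    (he : ∀ s ∈ g.eve, (∃ t, g.trans s t ∧ t ∈ S) → s ∈ S)
    (ha : ∀ s, s ∉ g.eve → (∃ t, g.trans s t) → (∀ t, g.trans s t → t ∈ S) → s ∈ S) :
    g.WinE ⊆ S := by
  have key : ∀ o : Ordinal.{0}, g.W o ⊆ S := by
    intro o
    induction o using Ordinal.induction with
    | _ o IH =>
      by_cases h : o = 0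
      · subst h; rw [W_zero]; exact h0
      · intro s hsW
        rw [W, if_neg h] at hsW
        have hsub : (⋃ o' : {x : Ordinal.{0} // x < o}, g.W o'.1) ⊆ S := by
          intro t ht
          obtain ⟨o', ho'⟩ := Set.mem_iUnion.1 ht
          exact IH o'.1 o'.2 ho'
        rcases hsW.2 with ⟨hev, t, ht, htW⟩ | ⟨hev, hex, hall⟩
        · exact he s hev ⟨t, ht, hsub htW⟩
        · exact ha s hev hex fun t ht => hsub (hall t ht)
  intro s hs
  obtain ⟨o, ho⟩ := Set.mem_iUnion.1 hs
  exact key o ho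

end RGame

section Gadget

variable {m c : ℕ}

/-- The candidate winning set. -/
def WinP (m c : ℕ) : GCSt × ℕ → Prop := fun p =>
  match p.1 with
  | GCSt.gc => p.2 % m ≠ c
  | GCSt.gc' => p.2 ≠ c
  | GCSt.gbc => p.2 % m = c
  | GCSt.gbc' => m ≤ p.2 ∨ p.2 = c
  | GCSt.ec => p.2 ≠ c
  | GCSt.ec' => 1 ≤ p.2
  | GCSt.ebc => p.2 = c
  | GCSt.ebc' => p.2 = 0
  | GCSt.pwin => True
  | GCSt.pA => False

lemma hclt (hm : 2 ≤ m) (hc : c = 0 ∨ c = m - 1) : c < m := by omega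

section Sound

variable (hm : 2 ≤ m) (hc : c = 0 ∨ c = m - 1)

local notation "G" => ocnGame GCEve (GCRule m c) GCSt.pwin

lemma win_pwin (k : ℕ) : (GCSt.pwin, k) ∈ (G).WinE :=
  RGame.target_subset_WinE rfl

lemma win_ec' {k : ℕ} (hk : 1 ≤ k) : (GCSt.ec', k) ∈ (G).WinE := by
  refine RGame.mem_WinE_of_eve (t := (GCSt.pwin, k - 1)) (by simp [ocnGame, GCEve]) ?_ (win_pwin _)
  exact ⟨-1, GCRule.r3, by push_cast; omega⟩

lemma win_ebc'0 : (GCSt.ebc', 0) ∈ (G).WinE := by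
  refine RGame.mem_WinE_of_adam (by simp [ocnGame, GCEve]) ?_ ?_
  · exact ⟨(GCSt.pwin, 0), 0, GCRule.r6, by simp⟩
  · rintro ⟨q', k'⟩ ⟨z, hr, hz⟩
    cases hr with
    | r5 => omega
    | r6 => exact win_pwin _

lemma win_ec {k : ℕ} (hk : k ≠ c) : (GCSt.ec, k) ∈ (G).WinE := by
  refine RGame.mem_WinE_of_adam (by simp [ocnGame, GCEve]) ?_ ?_
  · exact ⟨(GCSt.pwin, k), 0, GCRule.r2, by simp⟩
  · rintro ⟨q', k'⟩ ⟨z, hr, hz⟩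
    cases hr with
    | r1 => exact win_ec' (by omega)
    | r2 => exact win_pwin _

lemma win_ebc : (GCSt.ebc, c) ∈ (G).WinE := by
  refine RGame.mem_WinE_of_eve (t := (GCSt.ebc', 0)) (by simp [ocnGame, GCEve]) ?_ win_ebc'0
  exact ⟨-(c : ℤ), GCRule.r4, by push_cast; omega⟩

lemma win_gc' {k : ℕ} (hk : k ≠ c) : (GCSt.gc', k) ∈ (G).WinE := by
  by_cases hkm : m ≤ k
  · refine RGame.mem_WinE_of_eve (t := (GCSt.pwin, k - m)) (by simp [ocnGame, GCEve]) ?_ (win_pwin _)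
    exact ⟨-(m : ℤ), GCRule.g3, by push_cast; omega⟩
  · refine RGame.mem_WinE_of_eve (t := (GCSt.ec, k)) (by simp [ocnGame, GCEve]) ?_ (win_ec hk)
    exact ⟨0, GCRule.g4, by simp⟩

lemma win_gbc' {k : ℕ} (hk : m ≤ k ∨ k = c) : (GCSt.gbc', k) ∈ (G).WinE := by
  rcases hk with hkm | rfl
  · refine RGame.mem_WinE_of_eve (t := (GCSt.pwin, k - m)) (by simp [ocnGame, GCEve]) ?_ (win_pwin _)
    exact ⟨-(m : ℤ), GCRule.g7, by push_cast; omega⟩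
  · refine RGame.mem_WinE_of_eve (t := (GCSt.ebc, k)) (by simp [ocnGame, GCEve]) ?_ win_ebc
    exact ⟨0, GCRule.g8, by simp⟩

include hm hc in
lemma win_gc : ∀ k : ℕ, k % m ≠ c → (GCSt.gc, k) ∈ (G).WinE := by
  intro k
  induction k using Nat.strong_induction_on with
  | _ k IH =>
    intro hk
    have hcm : c < m := hclt hm hc
    refine RGame.mem_WinE_of_adam (by simp [ocnGame, GCEve]) ?_ ?_
    · exact ⟨(GCSt.gc', k), 0, GCRule.g2, by simp⟩
    · rintro ⟨q', k'⟩ ⟨z, hr, hz⟩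
      cases hr with
      | g1 =>
        have hkm : m ≤ k := by omega
        have hk' : k' = k - m := by omega
        subst hk'
        refine IH (k - m) (by omega) ?_
        rwa [← Nat.mod_eq_sub_mod hkm]
      | g2 =>
        have hk' : k' = k := by omega
        rw [hk']
        refine win_gc' ?_
        intro h; subst h
        exact hk (Nat.mod_eq_of_lt hcm)

include hm in
lemma win_gbc : ∀ k : ℕ, k % m = c → (GCSt.gbc, k) ∈ (G).WinE := by
  intro k
  induction k using Nat.strong_induction_on with
  | _ k IH =>
    intro hk
    refine RGame.mem_WinE_of_adam (by simp [ocnGame, GCEve]) ?_ ?_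
    · exact ⟨(GCSt.gbc', k), 0, GCRule.g6, by simp⟩
    · rintro ⟨q', k'⟩ ⟨z, hr, hz⟩
      cases hr with
      | g5 =>
        have hkm : m ≤ k := by omega
        have hk' : k' = k - m := by omega
        subst hk'
        refine IH (k - m) (by omega) ?_
        rwa [← Nat.mod_eq_sub_mod hkm]
      | g6 =>
        have hk' : k' = k := by omega
        rw [hk']
        refine win_gbc' ?_
        by_cases hkm : m ≤ k
        · exact Or.inl hkm
        · exact Or.inr (by rw [← Nat.mod_eq_of_lt (by omega : k < m)]; exact hk)

end Sound

lemma winE_subset_WinP (hm : 2 ≤ m) (hc : c = 0 ∨ c = m - 1) :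
    (ocnGame GCEve (GCRule m c) GCSt.pwin).WinE ⊆ {p | WinP m c p} := by
  have hcm : c < m := hclt hm hc
  refine RGame.WinE_subset ?_ ?_ ?_
  · rintro ⟨q, k⟩ hq
    simp only [ocnGame, Set.mem_setOf_eq] at hq
    subst hq
    simp [WinP]
  · rintro ⟨q, k⟩ hq ⟨⟨q', k'⟩, ⟨z, hr, hz⟩, hw⟩
    simp only [ocnGame, Set.mem_setOf_eq] at hq
    simp only [Set.mem_setOf_eq] at hw ⊢
    cases hr with
    | g1 => simp [GCEve] at hq
    | g2 => simp [GCEve] at hq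
    | g3 => simp only [WinP]; omega
    | g4 => simp only [WinP] at hw ⊢; omega
    | g5 => simp [GCEve] at hq
    | g6 => simp [GCEve] at hq
    | g7 => simp only [WinP]; omega
    | g8 => simp only [WinP] at hw ⊢; omega
    | r1 => simp [GCEve] at hq
    | r2 => simp [GCEve] at hq
    | r3 => simp only [WinP]; omega
    | r4 => simp only [WinP] at hw ⊢; omega
    | r5 => simp [GCEve] at hq
    | r6 => simp [GCEve] at hq
  · rintro ⟨q, k⟩ hq hex hall
    simp only [ocnGame, Set.mem_setOf_eq] at hq
    simp only [Set.mem_setOf_eq]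
    cases q with
    | gc' => exact absurd (by simp [GCEve]) hq
    | gbc' => exact absurd (by simp [GCEve]) hq
    | ec' => exact absurd (by simp [GCEve]) hq
    | ebc => exact absurd (by simp [GCEve]) hq
    | pwin => exact absurd (by simp [GCEve]) hq
    | pA => exact absurd (by simp [GCEve]) hq
    | ec =>
      simp only [WinP]
      intro hkc
      have := hall (GCSt.ec', 0) ⟨-(c : ℤ), GCRule.r1, by push_cast; omega⟩
      simp [WinP] at this
    | ebc' =>
      simp only [WinP]
      by_contra hk0
      have := hall (GCSt.pA, k - 1) ⟨-1, GCRule.r5, by push_cast; omega⟩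
      simp [WinP] at this
    | gc =>
      simp only [WinP]
      intro hkm
      by_cases hlt : k < m
      · have hkc : k = c := by rw [← Nat.mod_eq_of_lt hlt]; exact hkm
        have := hall (GCSt.gc', k) ⟨0, GCRule.g2, by simp⟩
        simp only [Set.mem_setOf_eq, WinP] at this
        exact this hkc
      · have hmk : m ≤ k := by omega
        have := hall (GCSt.gc, k - m) ⟨-(m : ℤ), GCRule.g1, by push_cast; omega⟩
        simp only [Set.mem_setOf_eq, WinP] at this
        exact this (by rwa [← Nat.mod_eq_sub_mod hmk])
    | gbc =>
      simp only [WinP]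
      by_contra hkm
      by_cases hlt : k < m
      · have := hall (GCSt.gbc', k) ⟨0, GCRule.g6, by simp⟩
        simp only [Set.mem_setOf_eq, WinP] at this
        rcases this with h | h
        · omega
        · exact hkm (by rw [← Nat.mod_eq_of_lt hlt] at h; exact h)
      · have hmk : m ≤ k := by omega
        have := hall (GCSt.gbc, k - m) ⟨-(m : ℤ), GCRule.g5, by push_cast; omega⟩
        simp only [Set.mem_setOf_eq, WinP] at this
        exact hkm (by rwa [Nat.mod_eq_sub_mod hmk])

end Gadget


/-- for `c ∈ {0, m-1}`, `g_c(k)` is winning for Eve iff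
`k mod m ≠ c`, and `ḡ_c(k)` is winning for Eve iff `k mod m = c`. -/
theorem g_gadget_winning (m c : ℕ) (hm : 2 ≤ m) (hc : c = 0 ∨ c = m - 1) (k : ℕ) :
    ((GCSt.gc, k) ∈ (ocnGame GCEve (GCRule m c) GCSt.pwin).WinE ↔ k % m ≠ c) ∧
    ((GCSt.gbc, k) ∈ (ocnGame GCEve (GCRule m c) GCSt.pwin).WinE ↔ k % m = c) := by
  constructor
  · constructor
    · intro h
      have := winE_subset_WinP hm hc h
      simpa [WinP] using this
    · exact win_gc hm hc k
  · constructor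
    · intro h
      have := winE_subset_WinP hm hc h
      simpa [WinP] using this
    · exact win_gbc hm k
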